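/- Sylvester's double sum Sylv^{p,q}(A,B;x), a priori a rational function in the indeterminates of A and B, is in fact a polynomial in Z[A,B][x] of degree at most d = p+q in x (assuming d < min{m,n}, or d = min{m,n} with m ≠ n). -/

import Mathlib

open Polynomial Matrix Finset

/-- Sylvester's double sum Sylv^{p,q}(A,B;x), as an element of F[X]:
Σ_{|A'|=p, |B'|=q} R(x,A') R(x,B') · R(A',B') R(A∖A',B∖B') / (R(A',A∖A') R(B',B∖B')). -/
noncomputable def sylv {F : Type*} [Field F] {m n : ℕ} (A : Fin m → F) (B : Fin n → F)
    (p q : ℕ) : Polynomial F :=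
  ∑ A' ∈ Finset.powersetCard p (Finset.univ : Finset (Fin m)),
    ∑ B' ∈ Finset.powersetCard q (Finset.univ : Finset (Fin n)),
      (∏ i ∈ A', (X - C (A i))) * (∏ j ∈ B', (X - C (B j))) *
        C ((∏ i ∈ A', ∏ j ∈ B', (A i - B j)) * (∏ i ∈ A'ᶜ, ∏ j ∈ B'ᶜ, (A i - B j)) /
            ((∏ i ∈ A', ∏ i' ∈ A'ᶜ, (A i - A i')) * (∏ j ∈ B', ∏ j' ∈ B'ᶜ, (B j - B j'))))

set_option synthInstance.maxHeartbeats 1000000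
set_option maxHeartbeats 4000000

namespace Stmt17Aux

lemma prod_pairs_eq {M : Type*} [CommMonoid M] {k : ℕ} (f : Fin k → Fin k → M) :
    ∏ p ∈ (univ ×ˢ univ).filter (fun p : Fin k × Fin k => p.1 < p.2), f p.1 p.2
      = ∏ i, ∏ j ∈ Finset.Ioi i, f i j := by
  rw [Finset.prod_filter, Finset.prod_product]
  refine Finset.prod_congr rfl fun i _ => ?_
  rw [← Finset.prod_filter]
  refine Finset.prod_congr ?_ fun _ _ => rfl
  ext x; simp

lemma prod_sub_dvd {A : Type*} [CommRing A] {k : ℕ} (x : Fin k → A) (s : Finset (Fin k)) :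
    (∏ i ∈ s, ∏ j ∈ sᶜ, (x i - x j)) ∣ ∏ i, ∏ j ∈ Finset.Ioi i, (x j - x i) := by
  classical
  rw [← prod_pairs_eq fun i j => x j - x i, ← Finset.prod_product']
  set T := (univ ×ˢ univ).filter (fun p : Fin k × Fin k => p.1 < p.2) with hT
  set ι : Fin k × Fin k → Fin k × Fin k := fun p => if p.1 < p.2 then p else p.swap with hι
  have hmem : ∀ p : Fin k × Fin k, p ∈ s ×ˢ sᶜ → p.1 ≠ p.2 := by
    intro p hp h
    rw [Finset.mem_product, Finset.mem_compl] at hp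
    exact hp.2 (h ▸ hp.1)
  have hinj : ∀ p ∈ s ×ˢ sᶜ, ∀ q ∈ s ×ˢ sᶜ, ι p = ι q → p = q := by
    intro p hp q hq h
    have hp' := Finset.mem_product.1 hp
    have hq' := Finset.mem_product.1 hq
    by_cases h1 : p.1 < p.2 <;> by_cases h2 : q.1 < q.2 <;>
      simp only [hι, h1, h2, if_true, if_false] at h
    · exact h
    · exfalso
      have : p.1 = q.2 := by rw [h]; rfl
      exact (Finset.mem_compl.1 hq'.2) (this ▸ hp'.1)
    · exfalso
      have : q.1 = p.2 := by rw [← h]; rfl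
      exact (Finset.mem_compl.1 hp'.2) (this ▸ hq'.1)
    · exact Prod.swap_injective h
  have himg : (s ×ˢ sᶜ).image ι ⊆ T := by
    intro p hp
    obtain ⟨q, hq, rfl⟩ := Finset.mem_image.1 hp
    rw [hT, Finset.mem_filter]
    refine ⟨by simp, ?_⟩
    by_cases h1 : q.1 < q.2
    · simp [hι, h1]
    · have := (lt_or_gt_of_ne (hmem q hq)).resolve_left h1
      simpa [hι, h1] using this
  refine dvd_trans ?_ (Finset.prod_dvd_prod_of_subset _ _ _ himg)
  rw [Finset.prod_image hinj]
  have : ∏ p ∈ s ×ˢ sᶜ, (x (ι p).2 - x (ι p).1)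
      = (∏ p ∈ s ×ˢ sᶜ, (if p.1 < p.2 then (-1 : A) else 1))
        * ∏ p ∈ s ×ˢ sᶜ, (x p.1 - x p.2) := by
    rw [← Finset.prod_mul_distrib]
    refine Finset.prod_congr rfl fun p _ => ?_
    by_cases h : p.1 < p.2 <;> simp [hι, h] <;> ring
  rw [this]
  exact dvd_mul_left _ _


open MvPolynomial in
noncomputable def eqv {σ : Type*} [DecidableEq σ] (v : σ) :
    MvPolynomial σ ℤ ≃ₐ[ℤ] Polynomial (MvPolynomial {w : σ // w ≠ v} ℤ) :=
  (renameEquiv ℤ (Equiv.optionSubtypeNe v).symm).trans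
    (optionEquivLeft ℤ {w : σ // w ≠ v})

open MvPolynomial in
lemma eqv_X_self {σ : Type*} [DecidableEq σ] (v : σ) :
    eqv v (X v : MvPolynomial σ ℤ) = Polynomial.X := by
  simp [eqv, Equiv.optionSubtypeNe_symm_self, optionEquivLeft_X_none]

open MvPolynomial in
lemma eqv_X_ne {σ : Type*} [DecidableEq σ] {v u : σ} (h : u ≠ v) :
    eqv v (X u : MvPolynomial σ ℤ) = Polynomial.C (X ⟨u, h⟩) := by
  simp [eqv, Equiv.optionSubtypeNe_symm_of_ne h, optionEquivLeft_X_some]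

open MvPolynomial in
lemma prime_X_sub_X {σ : Type*} [DecidableEq σ] {u v : σ} (huv : u ≠ v) :
    Prime (X v - X u : MvPolynomial σ ℤ) := by
  rw [← MulEquiv.prime_iff (eqv v).toMulEquiv]
  show Prime ((eqv v) (X v - X u : MvPolynomial σ ℤ))
  rw [map_sub, eqv_X_self, eqv_X_ne huv]
  exact Polynomial.prime_X_sub_C _

open MvPolynomial in
lemma rename_swap_neg_dvd {σ : Type*} [DecidableEq σ] {u v : σ} (huv : u ≠ v)
    {f : MvPolynomial σ ℤ} (h : rename (⇑(Equiv.swap u v)) f = -f) :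
    (X v - X u : MvPolynomial σ ℤ) ∣ f := by
  set ε : MvPolynomial σ ℤ →+* MvPolynomial {w : σ // w ≠ v} ℤ :=
    (Polynomial.evalRingHom (X ⟨u, huv⟩)).comp (eqv v).toAlgHom.toRingHom with hε
  have hεX : ∀ w : σ, ε (X w) = X ⟨if w = v then u else w,
      by split <;> simp_all⟩ := by
    intro w
    by_cases hw : w = v
    · subst hw
      simp [hε, eqv_X_self]
    · simp [hε, eqv_X_ne hw, hw]
  have hcomp : ε.comp (rename (⇑(Equiv.swap u v)) :
      MvPolynomial σ ℤ →ₐ[ℤ] MvPolynomial σ ℤ).toRingHom = ε := by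
    apply MvPolynomial.ringHom_ext
    · intro r
      simp
    · intro w
      simp only [RingHom.comp_apply, AlgHom.toRingHom_eq_coe, RingHom.coe_coe, rename_X]
      rw [hεX, hεX]
      congr 1
      ext
      rcases eq_or_ne w u with rfl | hwu
      · simp [Equiv.swap_apply_left, huv, (Ne.symm huv)]
      · rcases eq_or_ne w v with rfl | hwv
        · simp [Equiv.swap_apply_right, huv]
        · simp [Equiv.swap_apply_of_ne_of_ne hwu hwv, hwv]
  have hε0 : ε f = 0 := by
    have h1 : ε f = - ε f := by
      have hx : ε ((rename (⇑(Equiv.swap u v))) f) = ε f := DFunLike.congr_fun hcomp f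
      conv_lhs => rw [← hx]
      rw [h, map_neg]
    have h2 : (2 : MvPolynomial {w : σ // w ≠ v} ℤ) * ε f = 0 := by linear_combination h1
    rcases mul_eq_zero.1 h2 with h3 | h3
    · exact absurd h3 two_ne_zero
    · exact h3
  have hroot : Polynomial.IsRoot (eqv v f) (X ⟨u, huv⟩) := hε0
  have hdvd : (Polynomial.X - Polynomial.C (X ⟨u, huv⟩)) ∣ eqv v f :=
    Polynomial.dvd_iff_isRoot.2 hroot
  have := _root_.map_dvd (eqv v).symm hdvd
  simpa only [map_sub, AlgEquiv.symm_apply_apply,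
    show (eqv v).symm Polynomial.X = X v from by
      rw [← eqv_X_self v, AlgEquiv.symm_apply_apply],
    show (eqv v).symm (Polynomial.C (X ⟨u, huv⟩)) = X u from by
      rw [← eqv_X_ne huv, AlgEquiv.symm_apply_apply]] using this


open MvPolynomial in
lemma not_associated_X_sub_X {σ : Type*} [DecidableEq σ] {a b c d : σ}
    (hab : a ≠ b) (hcd : c ≠ d) (h1 : (a, b) ≠ (c, d)) (h2 : (a, b) ≠ (d, c)) :
    ¬ Associated (X a - X b : MvPolynomial σ ℤ) (X c - X d) := by
  intro hassoc
  have hdvd : (X a - X b : MvPolynomial σ ℤ) ∣ (X c - X d) := hassoc.dvd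
  set s : σ → σ := fun w => if w = b then a else w with hs
  have hmap := _root_.map_dvd (rename s : MvPolynomial σ ℤ →ₐ[ℤ] MvPolynomial σ ℤ) hdvd
  simp only [AlgHom.coe_coe, map_sub, rename_X] at hmap
  have hsa : s a = a := by simp [hs, hab]
  have hsb : s b = a := by simp [hs]
  have h0 : (X (s a) : MvPolynomial σ ℤ) - X (s b) = 0 := by rw [hsa, hsb, sub_self]
  rw [h0] at hmap
  have hzero : (X (s c) : MvPolynomial σ ℤ) - X (s d) = 0 := zero_dvd_iff.1 hmap
  have hscd : s c = s d := X_injective (sub_eq_zero.1 hzero)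
  by_cases hcb : c = b
  · have h_sc : s c = a := by simp [hs, hcb]
    have hdb : d ≠ b := fun h => hcd (hcb.trans h.symm)
    have h_sd : s d = d := by simp [hs, hdb]
    have had : a = d := by rw [← h_sc, hscd, h_sd]
    exact h2 (by rw [had, ← hcb])
  · by_cases hdb : d = b
    · have h_sd : s d = a := by simp [hs, hdb]
      have h_sc : s c = c := by simp [hs, hcb]
      have hca : c = a := by rw [← h_sc, hscd, h_sd]
      exact h1 (by rw [hca, ← hdb])
    · refine hcd ?_
      have h_sc : s c = c := by simp [hs, hcb]
      have h_sd : s d = d := by simp [hs, hdb]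
      rw [← h_sc, hscd, h_sd]

lemma prod_primes_dvd' {α : Type*} [CommRing α] [IsDomain α] {ι : Type*} [DecidableEq ι]
    (s : Finset ι) (d : ι → α) (hp : ∀ i ∈ s, Prime (d i))
    (hna : ∀ i ∈ s, ∀ j ∈ s, i ≠ j → ¬ Associated (d i) (d j))
    {N : α} (hdvd : ∀ i ∈ s, d i ∣ N) : (∏ i ∈ s, d i) ∣ N := by
  classical
  induction s using Finset.induction_on generalizing N with
  | empty => simp
  | insert _ _ ha ih =>
    rename_i a s'
    rw [Finset.prod_insert ha]
    obtain ⟨k, rfl⟩ := hdvd a (Finset.mem_insert_self a s')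
    refine mul_dvd_mul_left _ (ih (fun i hi => hp i (Finset.mem_insert_of_mem hi))
      (fun i hi j hj hij => hna i (Finset.mem_insert_of_mem hi) j
        (Finset.mem_insert_of_mem hj) hij) (fun i hi => ?_))
    have hi' := hdvd i (Finset.mem_insert_of_mem hi)
    rcases (hp i (Finset.mem_insert_of_mem hi)).2.2 _ _ hi' with h | h
    · exfalso
      refine hna i (Finset.mem_insert_of_mem hi) a (Finset.mem_insert_self a s')
        (fun he => ha (he ▸ hi)) ?_
      exact (hp i (Finset.mem_insert_of_mem hi)).associated_of_dvd
        (hp a (Finset.mem_insert_self a s')) h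
    · exact h

lemma prod_Ioi_perm {A : Type*} [CommRing A] {k : ℕ} (x : Fin k → A) (τ : Equiv.Perm (Fin k)) :
    ∏ i, ∏ j ∈ Finset.Ioi i, (x (τ j) - x (τ i))
      = (Equiv.Perm.sign τ : ℤ) * ∏ i, ∏ j ∈ Finset.Ioi i, (x j - x i) := by
  have h1 := Matrix.det_vandermonde (fun i => x (τ i))
  have h2 := Matrix.det_vandermonde x
  have h3 : Matrix.vandermonde (fun i => x (τ i)) = (Matrix.vandermonde x).submatrix τ id := by
    ext i j; simp [Matrix.vandermonde_apply, Matrix.submatrix_apply]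
  rw [← h1, h3, Matrix.det_permute, h2]



lemma sylv_map {F F' : Type*} [Field F] [Field F'] (ψ : F →+* F') {m n : ℕ}
    (A : Fin m → F) (B : Fin n → F) (p q : ℕ) :
    (sylv A B p q).map ψ = sylv (fun i => ψ (A i)) (fun j => ψ (B j)) p q := by
  unfold sylv
  simp only [Polynomial.map_sum, Polynomial.map_mul, Polynomial.map_prod, Polynomial.map_sub,
    Polynomial.map_X, Polynomial.map_C, map_div₀, _root_.map_mul, _root_.map_prod,
    _root_.map_sub]

lemma compl_image {k : ℕ} (τ : Equiv.Perm (Fin k)) (s : Finset (Fin k)) :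
    (s.image τ)ᶜ = sᶜ.image τ := by
  ext x
  simp only [Finset.mem_compl, Finset.mem_image, not_exists, not_and]
  constructor
  · intro h
    refine ⟨τ.symm x, fun hs => (h _ hs (τ.apply_symm_apply x)), τ.apply_symm_apply x⟩
  · rintro ⟨y, hy, rfl⟩ z hz heq
    exact hy ((τ.injective heq) ▸ hz)

lemma sylv_permA {F : Type*} [Field F] {m n : ℕ} (A : Fin m → F) (B : Fin n → F) (p q : ℕ)
    (τ : Equiv.Perm (Fin m)) : sylv (fun i => A (τ i)) B p q = sylv A B p q := by
  unfold sylv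
  refine Finset.sum_nbij' (fun A' => A'.image τ) (fun A' => A'.image τ.symm) ?_ ?_ ?_ ?_ ?_
  · intro A' hA'
    rw [Finset.mem_powersetCard] at hA' ⊢
    exact ⟨Finset.subset_univ _, by rw [Finset.card_image_of_injective _ τ.injective, hA'.2]⟩
  · intro A' hA'
    rw [Finset.mem_powersetCard] at hA' ⊢
    exact ⟨Finset.subset_univ _, by rw [Finset.card_image_of_injective _ τ.symm.injective, hA'.2]⟩
  · intro A' _
    simp [Finset.image_image]
  · intro A' _
    simp [Finset.image_image]
  · intro A' _
    refine Finset.sum_congr rfl fun B' _ => ?_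
    have hinj : ∀ x ∈ A', ∀ y ∈ A', τ x = τ y → x = y := fun _ _ _ _ h => τ.injective h
    have hinjc : ∀ x ∈ A'ᶜ, ∀ y ∈ A'ᶜ, τ x = τ y → x = y := fun _ _ _ _ h => τ.injective h
    simp only [compl_image, Finset.prod_image hinj, Finset.prod_image hinjc]

lemma sylv_permB {F : Type*} [Field F] {m n : ℕ} (A : Fin m → F) (B : Fin n → F) (p q : ℕ)
    (τ : Equiv.Perm (Fin n)) : sylv A (fun j => B (τ j)) p q = sylv A B p q := by
  unfold sylv
  refine Finset.sum_congr rfl fun A' _ => ?_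
  refine Finset.sum_nbij' (fun B' => B'.image τ) (fun B' => B'.image τ.symm) ?_ ?_ ?_ ?_ ?_
  · intro B' hB'
    rw [Finset.mem_powersetCard] at hB' ⊢
    exact ⟨Finset.subset_univ _, by rw [Finset.card_image_of_injective _ τ.injective, hB'.2]⟩
  · intro B' hB'
    rw [Finset.mem_powersetCard] at hB' ⊢
    exact ⟨Finset.subset_univ _, by rw [Finset.card_image_of_injective _ τ.symm.injective, hB'.2]⟩
  · intro B' _
    simp [Finset.image_image]
  · intro B' _
    simp [Finset.image_image]
  · intro B' _
    have hinj : ∀ x ∈ B', ∀ y ∈ B', τ x = τ y → x = y := fun _ _ _ _ h => τ.injective h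
    have hinjc : ∀ x ∈ B'ᶜ, ∀ y ∈ B'ᶜ, τ x = τ y → x = y := fun _ _ _ _ h => τ.injective h
    simp only [compl_image, Finset.prod_image hinj, Finset.prod_image hinjc]


lemma sylv_degree_le {F : Type*} [Field F] {m n : ℕ} (A : Fin m → F) (B : Fin n → F)
    (p q : ℕ) : (sylv A B p q).degree ≤ (p + q : ℕ) := by
  unfold sylv
  refine (Polynomial.degree_sum_le _ _).trans (Finset.sup_le fun A' hA' => ?_)
  refine (Polynomial.degree_sum_le _ _).trans (Finset.sup_le fun B' hB' => ?_)
  have hA'c : A'.card = p := (Finset.mem_powersetCard.1 hA').2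
  have hB'c : B'.card = q := (Finset.mem_powersetCard.1 hB').2
  have hf : (∏ i ∈ A', (X - C (A i))).degree = (p : WithBot ℕ) := by
    rw [Polynomial.degree_prod]
    simp [Polynomial.degree_X_sub_C, hA'c]
  have hg : (∏ j ∈ B', (X - C (B j))).degree = (q : WithBot ℕ) := by
    rw [Polynomial.degree_prod]
    simp [Polynomial.degree_X_sub_C, hB'c]
  refine (Polynomial.degree_mul_le _ _).trans ?_
  refine le_trans (add_le_add (Polynomial.degree_mul_le _ _) Polynomial.degree_C_le) ?_
  rw [hf, hg]
  simp [← Nat.cast_add]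

section Main

open MvPolynomial

variable (m n : ℕ)

local notation "R" => MvPolynomial (Fin m ⊕ Fin n) ℤ
local notation "K" => FractionRing (MvPolynomial (Fin m ⊕ Fin n) ℤ)
local notation "φ" => algebraMap (MvPolynomial (Fin m ⊕ Fin n) ℤ)
  (FractionRing (MvPolynomial (Fin m ⊕ Fin n) ℤ))

lemma sylv_coeff_mem (p q k : ℕ) :
    (sylv (fun i => φ (X (Sum.inl i))) (fun j => φ (X (Sum.inr j))) p q).coeff k
      ∈ Set.range φ := by
  classical
  have hinjφ : Function.Injective φ := IsFractionRing.injective R K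
  set S : Polynomial K := sylv (fun i => φ (X (Sum.inl i))) (fun j => φ (X (Sum.inr j))) p q
    with hS
  set VA : R := ∏ i, ∏ j ∈ Finset.Ioi i, (X (Sum.inl j) - X (Sum.inl i)) with hVA
  set VB : R := ∏ i, ∏ j ∈ Finset.Ioi i, (X (Sum.inr j) - X (Sum.inr i)) with hVB
  -- nonvanishing facts
  have hXne : ∀ (u v : Fin m ⊕ Fin n), u ≠ v → (X u - X v : R) ≠ 0 :=
    fun u v h => sub_ne_zero.2 fun he => h (X_injective he)
  have hDAne : ∀ A' : Finset (Fin m),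
      (∏ i ∈ A', ∏ i' ∈ A'ᶜ, (X (Sum.inl i) - X (Sum.inl i') : R)) ≠ 0 := by
    intro A'
    rw [Finset.prod_ne_zero_iff]
    intro i hi
    rw [Finset.prod_ne_zero_iff]
    intro i' hi'
    exact hXne _ _ (fun he => (Finset.mem_compl.1 hi') (by
      cases Sum.inl_injective he; exact hi))
  have hDBne : ∀ B' : Finset (Fin n),
      (∏ j ∈ B', ∏ j' ∈ B'ᶜ, (X (Sum.inr j) - X (Sum.inr j') : R)) ≠ 0 := by
    intro B'
    rw [Finset.prod_ne_zero_iff]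
    intro j hj
    rw [Finset.prod_ne_zero_iff]
    intro j' hj'
    exact hXne _ _ (fun he => (Finset.mem_compl.1 hj') (by
      cases Sum.inr_injective he; exact hj))
  -- divisibility of denominators into the Vandermonde products
  have hdvdA : ∀ A' : Finset (Fin m),
      (∏ i ∈ A', ∏ i' ∈ A'ᶜ, (X (Sum.inl i) - X (Sum.inl i') : R)) ∣ VA :=
    fun A' => prod_sub_dvd (fun i => (X (Sum.inl i) : R)) A'
  have hdvdB : ∀ B' : Finset (Fin n),
      (∏ j ∈ B', ∏ j' ∈ B'ᶜ, (X (Sum.inr j) - X (Sum.inr j') : R)) ∣ VB :=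
    fun B' => prod_sub_dvd (fun j => (X (Sum.inr j) : R)) B'
  -- the lifted polynomial Q with Q.map φ = C (φ (VA * VB)) * S
  set Q : Polynomial R :=
    ∑ A' ∈ Finset.powersetCard p (Finset.univ : Finset (Fin m)),
      ∑ B' ∈ Finset.powersetCard q (Finset.univ : Finset (Fin n)),
        (∏ i ∈ A', (Polynomial.X - Polynomial.C (X (Sum.inl i)))) *
          (∏ j ∈ B', (Polynomial.X - Polynomial.C (X (Sum.inr j)))) *
          Polynomial.C ((∏ i ∈ A', ∏ j ∈ B', (X (Sum.inl i) - X (Sum.inr j))) *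
              (∏ i ∈ A'ᶜ, ∏ j ∈ B'ᶜ, (X (Sum.inl i) - X (Sum.inr j))) *
              ((hdvdA A').choose * (hdvdB B').choose)) with hQdef
  have hQ : Q.map φ = Polynomial.C (φ (VA * VB)) * S := by
    rw [hS]
    unfold sylv
    rw [hQdef, Polynomial.map_sum, Finset.mul_sum]
    refine Finset.sum_congr rfl fun A' _ => ?_
    rw [Polynomial.map_sum, Finset.mul_sum]
    refine Finset.sum_congr rfl fun B' _ => ?_
    rw [Polynomial.map_mul, Polynomial.map_mul, Polynomial.map_prod, Polynomial.map_prod,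
      Polynomial.map_C]
    simp only [Polynomial.map_sub, Polynomial.map_X, Polynomial.map_C]
    have hsc : φ ((∏ i ∈ A', ∏ j ∈ B', (X (Sum.inl i) - X (Sum.inr j))) *
              (∏ i ∈ A'ᶜ, ∏ j ∈ B'ᶜ, (X (Sum.inl i) - X (Sum.inr j))) *
              ((hdvdA A').choose * (hdvdB B').choose))
        = φ (VA * VB) *
          ((∏ i ∈ A', ∏ j ∈ B', (φ (X (Sum.inl i)) - φ (X (Sum.inr j)))) *
              (∏ i ∈ A'ᶜ, ∏ j ∈ B'ᶜ, (φ (X (Sum.inl i)) - φ (X (Sum.inr j)))) /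
            ((∏ i ∈ A', ∏ i' ∈ A'ᶜ, (φ (X (Sum.inl i)) - φ (X (Sum.inl i')))) *
              (∏ j ∈ B', ∏ j' ∈ B'ᶜ, (φ (X (Sum.inr j)) - φ (X (Sum.inr j')))))) := by
      simp only [← _root_.map_sub, ← _root_.map_prod, ← _root_.map_mul]
      have hden : φ ((∏ i ∈ A', ∏ i' ∈ A'ᶜ, (X (Sum.inl i) - X (Sum.inl i') : R)) *
          (∏ j ∈ B', ∏ j' ∈ B'ᶜ, (X (Sum.inr j) - X (Sum.inr j') : R))) ≠ 0 := by
        rw [Ne, map_eq_zero_iff _ hinjφ, mul_eq_zero]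
        push_neg
        exact ⟨hDAne A', hDBne B'⟩
      rw [← mul_div_assoc, eq_div_iff hden, ← _root_.map_mul, ← _root_.map_mul]
      refine congrArg φ ?_
      have e1 := (hdvdA A').choose_spec
      have e2 := (hdvdB B').choose_spec
      linear_combination
        (-(((∏ i ∈ A', ∏ j ∈ B', (X (Sum.inl i) - X (Sum.inr j))) *
            (∏ i ∈ A'ᶜ, ∏ j ∈ B'ᶜ, (X (Sum.inl i) - X (Sum.inr j)))) * VB)) * e1 +
        (-(((∏ i ∈ A', ∏ j ∈ B', (X (Sum.inl i) - X (Sum.inr j))) *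
            (∏ i ∈ A'ᶜ, ∏ j ∈ B'ᶜ, (X (Sum.inl i) - X (Sum.inr j)))) *
          (∏ i ∈ A', ∏ i' ∈ A'ᶜ, (X (Sum.inl i) - X (Sum.inl i'))) *
          (hdvdA A').choose)) * e2
    rw [hsc, Polynomial.C_mul]
    ring
  have hcoefQ : ∀ k' : ℕ, φ (Q.coeff k') = φ (VA * VB) * S.coeff k' := by
    intro k'
    rw [← Polynomial.coeff_map, hQ, Polynomial.coeff_C_mul]
  set PA : Finset ((Fin m ⊕ Fin n) × (Fin m ⊕ Fin n)) :=
    ((univ ×ˢ univ).filter (fun r : Fin m × Fin m => r.1 < r.2)).image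
      (fun r => (Sum.inl r.1, Sum.inl r.2)) with hPA
  set PB : Finset ((Fin m ⊕ Fin n) × (Fin m ⊕ Fin n)) :=
    ((univ ×ˢ univ).filter (fun r : Fin n × Fin n => r.1 < r.2)).image
      (fun r => (Sum.inr r.1, Sum.inr r.2)) with hPB
  have hmemPA : ∀ r ∈ PA, ∃ i j : Fin m, i < j ∧ r = (Sum.inl i, Sum.inl j) := by
    intro r hr
    obtain ⟨r', hr', rfl⟩ := Finset.mem_image.1 hr
    exact ⟨r'.1, r'.2, (Finset.mem_filter.1 hr').2, rfl⟩
  have hmemPB : ∀ r ∈ PB, ∃ i j : Fin n, i < j ∧ r = (Sum.inr i, Sum.inr j) := by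
    intro r hr
    obtain ⟨r', hr', rfl⟩ := Finset.mem_image.1 hr
    exact ⟨r'.1, r'.2, (Finset.mem_filter.1 hr').2, rfl⟩
  have hdisj : Disjoint PA PB := by
    rw [Finset.disjoint_left]
    rintro r hr1 hr2
    obtain ⟨i, j, hij, rfl⟩ := hmemPA r hr1
    obtain ⟨i', j', hij', he⟩ := hmemPB _ hr2
    exact Sum.inl_ne_inr (congrArg Prod.fst he)
  have hVprod : VA * VB = ∏ r ∈ PA ∪ PB, (X r.2 - X r.1 : R) := by
    rw [Finset.prod_union hdisj, hPA, hPB,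
      Finset.prod_image (fun x _ y _ hxy => by
        have h1 : (Sum.inl x.1 : Fin m ⊕ Fin n) = Sum.inl y.1 := congrArg Prod.fst hxy
        have h2 : (Sum.inl x.2 : Fin m ⊕ Fin n) = Sum.inl y.2 := congrArg Prod.snd hxy
        exact Prod.ext (Sum.inl_injective h1) (Sum.inl_injective h2)),
      Finset.prod_image (fun x _ y _ hxy => by
        have h1 : (Sum.inr x.1 : Fin m ⊕ Fin n) = Sum.inr y.1 := congrArg Prod.fst hxy
        have h2 : (Sum.inr x.2 : Fin m ⊕ Fin n) = Sum.inr y.2 := congrArg Prod.snd hxy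
        exact Prod.ext (Sum.inr_injective h1) (Sum.inr_injective h2))]
    rw [prod_pairs_eq (fun i j => (X (Sum.inl j) - X (Sum.inl i) : R)),
      prod_pairs_eq (fun i j => (X (Sum.inr j) - X (Sum.inr i) : R))]
  have hne : ∀ r ∈ PA ∪ PB, r.1 ≠ r.2 := by
    intro r hr
    rcases Finset.mem_union.1 hr with h | h
    · obtain ⟨i, j, hij, rfl⟩ := hmemPA r h
      exact fun he => absurd (Sum.inl_injective he) hij.ne
    · obtain ⟨i, j, hij, rfl⟩ := hmemPB r h
      exact fun he => absurd (Sum.inr_injective he) hij.ne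
  have hprime : ∀ r ∈ PA ∪ PB, Prime (X r.2 - X r.1 : R) :=
    fun r hr => prime_X_sub_X (hne r hr)
  have hnoswap : ∀ r ∈ PA ∪ PB, ∀ r' ∈ PA ∪ PB, r.1 = r'.2 → r.2 = r'.1 → False := by
    intro r hr r' hr'
    rcases Finset.mem_union.1 hr with h | h <;> rcases Finset.mem_union.1 hr' with h' | h'
    · obtain ⟨i, j, hij, rfl⟩ := hmemPA r h
      obtain ⟨i', j', hij', rfl⟩ := hmemPA r' h'
      intro h1 h2
      have e1 : i = j' := Sum.inl_injective h1
      have e2 : j = i' := Sum.inl_injective h2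
      subst e1; subst e2
      exact absurd hij (asymm hij')
    · obtain ⟨i, j, hij, rfl⟩ := hmemPA r h
      obtain ⟨i', j', hij', rfl⟩ := hmemPB r' h'
      intro h1 _
      exact Sum.inl_ne_inr h1
    · obtain ⟨i, j, hij, rfl⟩ := hmemPB r h
      obtain ⟨i', j', hij', rfl⟩ := hmemPA r' h'
      intro h1 _
      exact Sum.inl_ne_inr h1.symm
    · obtain ⟨i, j, hij, rfl⟩ := hmemPB r h
      obtain ⟨i', j', hij', rfl⟩ := hmemPB r' h'
      intro h1 h2
      have e1 : i = j' := Sum.inr_injective h1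
      have e2 : j = i' := Sum.inr_injective h2
      subst e1; subst e2
      exact absurd hij (asymm hij')
  have hassoc : ∀ r ∈ PA ∪ PB, ∀ r' ∈ PA ∪ PB, r ≠ r' →
      ¬ Associated (X r.2 - X r.1 : R) (X r'.2 - X r'.1) := by
    intro r hr r' hr' hrr'
    refine not_associated_X_sub_X (hne r hr).symm (hne r' hr').symm ?_ ?_
    · intro he
      exact hrr' (Prod.ext (congrArg Prod.snd he) (congrArg Prod.fst he))
    · intro he
      exact hnoswap r hr r' hr' (congrArg Prod.snd he) (congrArg Prod.fst he)
  have hdvdN : ∀ r ∈ PA ∪ PB, (X r.2 - X r.1 : R) ∣ Q.coeff k := by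
    intro r hr
    have hner : r.1 ≠ r.2 := hne r hr
    set gσ : Equiv.Perm (Fin m ⊕ Fin n) := Equiv.swap r.1 r.2 with hgσ
    set ρ : MvPolynomial (Fin m ⊕ Fin n) ℤ ≃+* MvPolynomial (Fin m ⊕ Fin n) ℤ :=
      (renameEquiv ℤ gσ).toRingEquiv with hρ
    have hcomm : ∀ x : R, (IsFractionRing.ringEquivOfRingEquiv (B := R) ρ) (φ x) = φ (ρ x) :=
      fun x => IsFractionRing.ringEquivOfRingEquiv_algebraMap ρ x
    set ρK : FractionRing (MvPolynomial (Fin m ⊕ Fin n) ℤ) ≃+*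
        FractionRing (MvPolynomial (Fin m ⊕ Fin n) ℤ) :=
      IsFractionRing.ringEquivOfRingEquiv ρ with hρK
    have hρX : ∀ w, ρ (X w : R) = X (gσ w) := fun w => by
      rw [hρ]
      exact rename_X _ _
    have hSinv : S.map (ρK : FractionRing (MvPolynomial (Fin m ⊕ Fin n) ℤ) →+* _) = S := by
      rcases Finset.mem_union.1 hr with h | h
      · obtain ⟨i₀, i₁, hii, rfl⟩ := hmemPA r h
        rw [hS, sylv_map]
        have hA : (fun i : Fin m => (ρK : FractionRing (MvPolynomial (Fin m ⊕ Fin n) ℤ) →+*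
              FractionRing (MvPolynomial (Fin m ⊕ Fin n) ℤ)) (φ (X (Sum.inl i))))
            = (fun i : Fin m => φ (X (Sum.inl (Equiv.swap i₀ i₁ i)))) := by
          funext i
          show ρK (φ (X (Sum.inl i))) = _
          rw [hcomm, hρX]
          have hg : gσ (Sum.inl i) = Sum.inl (Equiv.swap i₀ i₁ i) :=
            Function.Injective.swap_apply Sum.inl_injective i₀ i₁ i
          rw [hg]
        have hB : (fun j : Fin n => (ρK : FractionRing (MvPolynomial (Fin m ⊕ Fin n) ℤ) →+*
              FractionRing (MvPolynomial (Fin m ⊕ Fin n) ℤ)) (φ (X (Sum.inr j))))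
            = (fun j : Fin n => φ (X (Sum.inr j))) := by
          funext j
          show ρK (φ (X (Sum.inr j))) = _
          rw [hcomm, hρX]
          have hg : gσ (Sum.inr j) = Sum.inr j :=
            Equiv.swap_apply_of_ne_of_ne (by simp) (by simp)
          rw [hg]
        rw [hA, hB]
        exact (sylv_permA (fun i => φ (X (Sum.inl i))) (fun j => φ (X (Sum.inr j))) p q
          (Equiv.swap i₀ i₁)).trans hS.symm
      · obtain ⟨j₀, j₁, hjj, rfl⟩ := hmemPB r h
        rw [hS, sylv_map]
        have hA : (fun i : Fin m => (ρK : FractionRing (MvPolynomial (Fin m ⊕ Fin n) ℤ) →+*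
              FractionRing (MvPolynomial (Fin m ⊕ Fin n) ℤ)) (φ (X (Sum.inl i))))
            = (fun i : Fin m => φ (X (Sum.inl i))) := by
          funext i
          show ρK (φ (X (Sum.inl i))) = _
          rw [hcomm, hρX]
          have hg : gσ (Sum.inl i) = Sum.inl i :=
            Equiv.swap_apply_of_ne_of_ne (by simp) (by simp)
          rw [hg]
        have hB : (fun j : Fin n => (ρK : FractionRing (MvPolynomial (Fin m ⊕ Fin n) ℤ) →+*
              FractionRing (MvPolynomial (Fin m ⊕ Fin n) ℤ)) (φ (X (Sum.inr j))))
            = (fun j : Fin n => φ (X (Sum.inr (Equiv.swap j₀ j₁ j)))) := by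
          funext j
          show ρK (φ (X (Sum.inr j))) = _
          rw [hcomm, hρX]
          have hg : gσ (Sum.inr j) = Sum.inr (Equiv.swap j₀ j₁ j) :=
            Function.Injective.swap_apply Sum.inr_injective j₀ j₁ j
          rw [hg]
        rw [hA, hB]
        exact (sylv_permB (fun i => φ (X (Sum.inl i))) (fun j => φ (X (Sum.inr j))) p q
          (Equiv.swap j₀ j₁)).trans hS.symm
    have hρV : ρ (VA * VB) = -(VA * VB) := by
      rcases Finset.mem_union.1 hr with h | h
      · obtain ⟨i₀, i₁, hii, rfl⟩ := hmemPA r h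
        have h1 : ρ VA = -VA := by
          rw [hVA]
          simp only [_root_.map_prod, _root_.map_sub, hρX]
          have hgl : ∀ w : Fin m, gσ (Sum.inl w) = Sum.inl (Equiv.swap i₀ i₁ w) := fun w =>
            Function.Injective.swap_apply Sum.inl_injective i₀ i₁ w
          simp only [hgl]
          rw [prod_Ioi_perm (fun i => (X (Sum.inl i) : R)) (Equiv.swap i₀ i₁),
            Equiv.Perm.sign_swap hii.ne]
          rw [← hVA]
          push_cast
          ring
        have h2 : ρ VB = VB := by
          rw [hVB]
          simp only [_root_.map_prod, _root_.map_sub, hρX]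
          have hgr : ∀ w : Fin n, gσ (Sum.inr w) = Sum.inr w := fun w =>
            Equiv.swap_apply_of_ne_of_ne (by simp) (by simp)
          simp only [hgr]
        rw [_root_.map_mul, h1, h2]
        ring
      · obtain ⟨j₀, j₁, hjj, rfl⟩ := hmemPB r h
        have h1 : ρ VA = VA := by
          rw [hVA]
          simp only [_root_.map_prod, _root_.map_sub, hρX]
          have hgl : ∀ w : Fin m, gσ (Sum.inl w) = Sum.inl w := fun w =>
            Equiv.swap_apply_of_ne_of_ne (by simp) (by simp)
          simp only [hgl]
        have h2 : ρ VB = -VB := by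
          rw [hVB]
          simp only [_root_.map_prod, _root_.map_sub, hρX]
          have hgr : ∀ w : Fin n, gσ (Sum.inr w) = Sum.inr (Equiv.swap j₀ j₁ w) := fun w =>
            Function.Injective.swap_apply Sum.inr_injective j₀ j₁ w
          simp only [hgr]
          rw [prod_Ioi_perm (fun j => (X (Sum.inr j) : R)) (Equiv.swap j₀ j₁),
            Equiv.Perm.sign_swap hjj.ne]
          rw [← hVB]
          push_cast
          ring
        rw [_root_.map_mul, h1, h2]
        ring
    have hρScoeff : ρK (S.coeff k) = S.coeff k := by
      have h := congrArg (fun P => Polynomial.coeff P k) hSinv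
      simpa [Polynomial.coeff_map] using h
    have hNneg : ρ (Q.coeff k) = -(Q.coeff k) := by
      apply hinjφ
      rw [← hcomm, hcoefQ k]
      calc ρK (φ (VA * VB) * S.coeff k)
          = ρK (φ (VA * VB)) * ρK (S.coeff k) := _root_.map_mul _ _ _
        _ = φ (ρ (VA * VB)) * S.coeff k := by rw [hcomm, hρScoeff]
        _ = φ (-(VA * VB)) * S.coeff k := by rw [hρV]
        _ = -(φ (VA * VB) * S.coeff k) := by rw [map_neg]; ring
        _ = -(φ (Q.coeff k)) := by rw [← hcoefQ k]
        _ = φ (-(Q.coeff k)) := (map_neg _ _).symm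
    exact rename_swap_neg_dvd hner hNneg
  have hVdvd : VA * VB ∣ Q.coeff k := by
    rw [hVprod]
    exact prod_primes_dvd' _ _ hprime hassoc hdvdN
  obtain ⟨c, hc⟩ := hVdvd
  have hVKne : φ (VA * VB) ≠ 0 := by
    rw [Ne, map_eq_zero_iff _ hinjφ, hVprod, Finset.prod_eq_zero_iff]
    rintro ⟨r, hr, h0⟩
    exact (hprime r hr).ne_zero h0
  refine ⟨c, ?_⟩
  have hfin := hcoefQ k
  rw [hc, _root_.map_mul] at hfin
  exact mul_left_cancel₀ hVKne hfin

end Main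

end Stmt17Aux

/-- Sylvester's double sum Sylv^{p,q}(A,B;x), a priori a rational function
in the indeterminates A, B, is in fact a polynomial in ℤ[A,B][x] of degree at most
d = p+q in x.  Here A and B are lists of distinct indeterminates, realized as the
variables of ℤ[A,B] = MvPolynomial (Fin m ⊕ Fin n) ℤ inside its fraction field. -/
theorem stmt17 (m n p q : ℕ)
    (hd : p + q < min m n ∨ (m ≠ n ∧ p + q = min m n)) :
    ∃ P : Polynomial (MvPolynomial (Fin m ⊕ Fin n) ℤ),
      P.map (algebraMap (MvPolynomial (Fin m ⊕ Fin n) ℤ)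
          (FractionRing (MvPolynomial (Fin m ⊕ Fin n) ℤ))) =
        sylv (fun i => algebraMap (MvPolynomial (Fin m ⊕ Fin n) ℤ)
              (FractionRing (MvPolynomial (Fin m ⊕ Fin n) ℤ)) (MvPolynomial.X (Sum.inl i)))
          (fun j => algebraMap (MvPolynomial (Fin m ⊕ Fin n) ℤ)
              (FractionRing (MvPolynomial (Fin m ⊕ Fin n) ℤ)) (MvPolynomial.X (Sum.inr j)))
          p q ∧
      P.degree ≤ (p + q : ℕ) := by
  classical
  have hmem : (sylv (fun i => algebraMap (MvPolynomial (Fin m ⊕ Fin n) ℤ)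
          (FractionRing (MvPolynomial (Fin m ⊕ Fin n) ℤ)) (MvPolynomial.X (Sum.inl i)))
        (fun j => algebraMap (MvPolynomial (Fin m ⊕ Fin n) ℤ)
          (FractionRing (MvPolynomial (Fin m ⊕ Fin n) ℤ)) (MvPolynomial.X (Sum.inr j)))
        p q) ∈ Polynomial.lifts (algebraMap (MvPolynomial (Fin m ⊕ Fin n) ℤ)
          (FractionRing (MvPolynomial (Fin m ⊕ Fin n) ℤ))) := by
    rw [Polynomial.lifts_iff_coeff_lifts]
    intro k
    exact Stmt17Aux.sylv_coeff_mem m n p q k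
  obtain ⟨P, hP, hPdeg⟩ := Polynomial.mem_lifts_and_degree_eq hmem
  refine ⟨P, hP, ?_⟩
  rw [hPdeg]
  exact Stmt17Aux.sylv_degree_le _ _ p q
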